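/- Let D ⊆ ℕ⁺ be ∅-definable and cofinal with respect to divisibility (for every c ∈ ℕ⁺ there exists d ∈ D with c ∣ d). Then for every squarefree r ∈ ℕ⁺ there exist d₁, d₂ ∈ D such that the set of prime divisors of r equals the intersection of the set of prime divisors of d₁ with the set of prime divisors of d₂. -/
import Mathlib


open FirstOrder Language

/-- The language `L` with one binary function symbol `·` and one constant symbol `1`. -/
def L : FirstOrder.Language :=
  ⟨fun n => match n with | 0 => Unit | 2 => Unit | _ => Empty, fun _ => Empty⟩

/-- Any monoid is an `L`-structure, with `·` interpreted as multiplication and `1` as the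
identity. In particular `ℕ+` is the standard model of Skolem arithmetic, and
`Multiplicative ℕ` is the additive `L`-structure `(ℕ, +, 0)`. -/
instance (M : Type*) [Monoid M] : L.Structure M where
  funMap {n} f x :=
    match n, f, x with
    | 0, _, _ => 1
    | 2, _, x => x 0 * x 1
  RelMap r _ := r.elim

/-- The set of prime divisors of `a` (as positive naturals). -/
def sigma' (a : ℕ+) : Set ℕ+ := {p | (p : ℕ).Prime ∧ p ∣ a}

/-! ### Auxiliary material: automorphisms of `ℕ+` from permutations of the primes -/

/-- Identity reinterpretation of a `PrimeMultiset` as a plain multiset of primes. -/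
def pm2m (v : PrimeMultiset) : Multiset Nat.Primes := v

/-- The map on `ℕ+` induced by a map on primes. -/
noncomputable def mapPM (π : Nat.Primes → Nat.Primes) (n : ℕ+) : ℕ+ :=
  PrimeMultiset.prod (Multiset.map π (pm2m (PNat.factorMultiset n)))

theorem prime_dvd_iff_mem (q : Nat.Primes) (n : ℕ+) :
    (q : ℕ+) ∣ n ↔ q ∈ pm2m (PNat.factorMultiset n) := by
  constructor
  · intro h
    have h2 : PrimeMultiset.ofPrime q ≤ n.factorMultiset := by
      apply PrimeMultiset.prod_dvd_iff'.mp
      rwa [PrimeMultiset.prod_ofPrime]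
    exact Multiset.mem_of_le h2 (Multiset.mem_singleton_self q)
  · intro h
    have h2 : PrimeMultiset.ofPrime q ≤ n.factorMultiset := Multiset.singleton_le.mpr h
    have h3 := PrimeMultiset.prod_dvd_iff'.mpr h2
    rwa [PrimeMultiset.prod_ofPrime] at h3

theorem fm_mapPM (π : Nat.Primes → Nat.Primes) (n : ℕ+) :
    pm2m (PNat.factorMultiset (mapPM π n)) = Multiset.map π (pm2m (PNat.factorMultiset n)) :=
  congrArg pm2m (PrimeMultiset.factorMultiset_prod _)

theorem mapPM_mul (π : Nat.Primes → Nat.Primes) (a b : ℕ+) :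
    mapPM π (a * b) = mapPM π a * mapPM π b := by
  unfold mapPM
  have h1 : pm2m (PNat.factorMultiset (a * b)) =
      pm2m (PNat.factorMultiset a) + pm2m (PNat.factorMultiset b) :=
    congrArg pm2m (PNat.factorMultiset_mul a b)
  rw [h1, Multiset.map_add]
  exact PrimeMultiset.prod_add _ _

theorem mapPM_id_of_fixed (π : Nat.Primes → Nat.Primes) (n : ℕ+)
    (h : ∀ q : Nat.Primes, q ∈ pm2m (PNat.factorMultiset n) → π q = q) : mapPM π n = n := by
  unfold mapPM
  have h1 : Multiset.map π (pm2m (PNat.factorMultiset n)) = pm2m (PNat.factorMultiset n) := by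
    have := Multiset.map_congr (f := π) (g := id) rfl h
    rw [this, Multiset.map_id]
  rw [h1]
  exact PNat.prod_factorMultiset n

theorem mapPM_cancel (π : Equiv.Perm Nat.Primes) (n : ℕ+) :
    mapPM π.symm (mapPM π n) = n := by
  show PrimeMultiset.prod (Multiset.map π.symm (pm2m (PNat.factorMultiset (mapPM π n)))) = n
  rw [fm_mapPM, Multiset.map_map]
  have h1 : Multiset.map (π.symm ∘ π) (pm2m (PNat.factorMultiset n)) =
      pm2m (PNat.factorMultiset n) := by
    have hfix : ∀ x ∈ pm2m (PNat.factorMultiset n), (π.symm ∘ π) x = id x :=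
      fun x _ => Equiv.symm_apply_apply π x
    have := Multiset.map_congr (f := (π.symm ∘ π : Nat.Primes → Nat.Primes)) (g := id)
      rfl hfix
    rw [this, Multiset.map_id]
  rw [h1]
  exact PNat.prod_factorMultiset n

/-- The multiplicative automorphism of `ℕ+` induced by a permutation of the primes. -/
noncomputable def primePermMulEquiv (π : Equiv.Perm Nat.Primes) : ℕ+ ≃* ℕ+ where
  toFun := mapPM π
  invFun := mapPM π.symm
  left_inv := mapPM_cancel π
  right_inv n := by
    have := mapPM_cancel π.symm n
    rwa [Equiv.symm_symm] at this
  map_mul' := mapPM_mul π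

theorem prime_dvd_mapPM (π : Equiv.Perm Nat.Primes) (q : Nat.Primes) (n : ℕ+) :
    (q : ℕ+) ∣ mapPM π n ↔ ((π.symm q : Nat.Primes) : ℕ+) ∣ n := by
  rw [prime_dvd_iff_mem, prime_dvd_iff_mem, fm_mapPM]
  constructor
  · intro h
    rcases Multiset.mem_map.mp h with ⟨p, hp, hpq⟩
    rwa [← hpq, Equiv.symm_apply_apply]
  · intro h
    exact Multiset.mem_map.mpr ⟨π.symm q, h, π.apply_symm_apply q⟩

/-- A multiplicative automorphism of `ℕ+` as an `L`-equivalence. -/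
def mulEquivToLEquiv (e : ℕ+ ≃* ℕ+) : (ℕ+) ≃[L] (ℕ+) where
  toEquiv := e.toEquiv
  map_fun' := by
    intro n f x
    match n, f with
    | 0, f => exact e.map_one
    | 1, f => exact f.elim
    | 2, f => exact map_mul e (x 0) (x 1)
    | (n + 3), f => exact f.elim
  map_rel' := by intro n r; exact r.elim

/-- A `∅`-definable subset of `ℕ+` is invariant under multiplicative automorphisms. -/
theorem definable_invariant (D : Set ℕ+)
    (hdef : ∃ φ : L.Formula (Fin 1), D = {a | φ.Realize (fun _ => a)})
    (e : ℕ+ ≃* ℕ+) (a : ℕ+) (ha : a ∈ D) : e a ∈ D := by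
  obtain ⟨φ, rfl⟩ := hdef
  have := StrongHomClass.realize_formula (mulEquivToLEquiv e)
    (φ := φ) (v := fun _ : Fin 1 => a)
  simp only [Set.mem_setOf_eq] at ha ⊢
  have h2 : ((mulEquivToLEquiv e) ∘ fun _ : Fin 1 => a) = fun _ : Fin 1 => e a := rfl
  rw [h2] at this
  exact this.mpr ha

/-- If `D ⊆ ℕ⁺` is `∅`-definable and cofinal with respect to divisibility, then the set of
prime divisors of any squarefree element is the intersection of the sets of prime divisors
of two elements of `D`. -/
theorem cofinal_dcl_contains_radicals (D : Set ℕ+)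
    (hdef : ∃ φ : L.Formula (Fin 1), D = {a | φ.Realize (fun _ => a)})
    (hcof : ∀ c : ℕ+, ∃ d ∈ D, c ∣ d) :
    ∀ r : ℕ+, (∀ p : ℕ+, (p : ℕ).Prime → ¬ p * p ∣ r) →
      ∃ d₁ ∈ D, ∃ d₂ ∈ D, sigma' r = sigma' d₁ ∩ sigma' d₂ := by
  intro r _hsf
  obtain ⟨d₁, hd₁D, hrd₁⟩ := hcof r
  -- the set of "bad" primes dividing both d₁ and d₂ but not r
  let T : ℕ+ → Finset ℕ := fun d₂ =>
    ((d₁ : ℕ).primeFactors ∩ (d₂ : ℕ).primeFactors) \ (r : ℕ).primeFactors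
  have hTmem : ∀ d₂ : ℕ+, ∀ p : ℕ, p ∈ T d₂ ↔
      (p.Prime ∧ p ∣ (d₁ : ℕ) ∧ p ∣ (d₂ : ℕ) ∧ ¬ p ∣ (r : ℕ)) := by
    intro d₂ p
    simp only [T, Finset.mem_sdiff, Finset.mem_inter, Nat.mem_primeFactors]
    constructor
    · rintro ⟨⟨⟨pp, h1, _⟩, ⟨_, h2, _⟩⟩, h3⟩
      exact ⟨pp, h1, h2, fun h => h3 ⟨pp, h, r.ne_zero⟩⟩
    · rintro ⟨pp, h1, h2, h3⟩
      exact ⟨⟨⟨pp, h1, d₁.ne_zero⟩, ⟨pp, h2, d₂.ne_zero⟩⟩, fun h => h3 h.2.1⟩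
  have coe_dvd : ∀ (P : Nat.Primes) (m : ℕ+), ((P : ℕ+) ∣ m) ↔ ((P : ℕ) ∣ (m : ℕ)) := by
    intro P m
    rw [PNat.dvd_iff]
    rfl
  -- main claim, by induction on the number of bad primes
  have key : ∀ n : ℕ, ∀ d₂ : ℕ+, d₂ ∈ D → r ∣ d₂ → (T d₂).card ≤ n →
      ∃ d₂' ∈ D, r ∣ d₂' ∧ ∀ p : ℕ+, (p : ℕ).Prime → p ∣ d₁ → p ∣ d₂' → p ∣ r := by
    intro n
    induction n with
    | zero =>
      intro d₂ hD hr hcard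
      refine ⟨d₂, hD, hr, ?_⟩
      intro p pp hp1 hp2
      by_contra hpr
      have hmem : (p : ℕ) ∈ T d₂ := (hTmem d₂ p).mpr
        ⟨pp, PNat.dvd_iff.mp hp1, PNat.dvd_iff.mp hp2, fun h => hpr (PNat.dvd_iff.mpr h)⟩
      have := Finset.card_pos.mpr ⟨(p : ℕ), hmem⟩
      omega
    | succ n ih =>
      intro d₂ hD hr hcard
      rcases Finset.eq_empty_or_nonempty (T d₂) with hemp | ⟨q, hq⟩
      · refine ⟨d₂, hD, hr, ?_⟩
        intro p pp hp1 hp2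
        by_contra hpr
        have hmem : (p : ℕ) ∈ T d₂ := (hTmem d₂ p).mpr
          ⟨pp, PNat.dvd_iff.mp hp1, PNat.dvd_iff.mp hp2, fun h => hpr (PNat.dvd_iff.mpr h)⟩
        rw [hemp] at hmem
        exact absurd hmem (Finset.notMem_empty _)
      · -- q is a bad prime; swap it with a fresh prime
        obtain ⟨qp, hqd₁, hqd₂, hqr'⟩ := (hTmem d₂ q).mp hq
        -- fresh prime q'
        obtain ⟨q', hq'big, q'p⟩ :=
          Nat.exists_infinite_primes ((d₁ : ℕ) * (d₂ : ℕ) * (r : ℕ) + 1)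
        have hd₁le : (d₁ : ℕ) ≤ (d₁ : ℕ) * (d₂ : ℕ) * (r : ℕ) := by
          calc (d₁ : ℕ) ≤ (d₁ : ℕ) * (d₂ : ℕ) := Nat.le_mul_of_pos_right _ d₂.pos
          _ ≤ (d₁ : ℕ) * (d₂ : ℕ) * (r : ℕ) := Nat.le_mul_of_pos_right _ r.pos
        have hd₂le : (d₂ : ℕ) ≤ (d₁ : ℕ) * (d₂ : ℕ) * (r : ℕ) := by
          calc (d₂ : ℕ) ≤ (d₁ : ℕ) * (d₂ : ℕ) := Nat.le_mul_of_pos_left _ d₁.pos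
          _ ≤ (d₁ : ℕ) * (d₂ : ℕ) * (r : ℕ) := Nat.le_mul_of_pos_right _ r.pos
        have hrle : (r : ℕ) ≤ (d₁ : ℕ) * (d₂ : ℕ) * (r : ℕ) :=
          Nat.le_mul_of_pos_left _ (Nat.mul_pos d₁.pos d₂.pos)
        have hq'd₁ : ¬ q' ∣ (d₁ : ℕ) := fun h => by
          have := Nat.le_of_dvd d₁.pos h; omega
        have hq'd₂ : ¬ q' ∣ (d₂ : ℕ) := fun h => by
          have := Nat.le_of_dvd d₂.pos h; omega
        have hq'r : ¬ q' ∣ (r : ℕ) := fun h => by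
          have := Nat.le_of_dvd r.pos h; omega
        have hqq' : q ≠ q' := fun h => hq'd₁ (h ▸ hqd₁)
        set Q : Nat.Primes := ⟨q, qp⟩ with hQ
        set Q' : Nat.Primes := ⟨q', q'p⟩ with hQ'
        set π : Equiv.Perm Nat.Primes := Equiv.swap Q Q' with hπ
        set e := primePermMulEquiv π with he
        -- e fixes r
        have her : e r = r := by
          show mapPM π r = r
          apply mapPM_id_of_fixed
          intro P hP
          have hPr : (P : ℕ) ∣ (r : ℕ) := (coe_dvd P r).mp ((prime_dvd_iff_mem P r).mpr hP)
          apply Equiv.swap_apply_of_ne_of_ne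
          · intro h; rw [h] at hPr; exact hqr' hPr
          · intro h; rw [h] at hPr; exact hq'r hPr
        refine ih (e d₂) (definable_invariant D hdef e d₂ hD) ?_ ?_
        · rw [← her]; exact map_dvd e hr
        · -- T (e d₂) ⊆ T d₂ \ {q}
          have hsub : T (e d₂) ⊆ (T d₂).erase q := by
            intro p hp
            obtain ⟨pp, hpd₁, hped₂, hpr⟩ := (hTmem (e d₂) p).mp hp
            set P : Nat.Primes := ⟨p, pp⟩ with hP
            have hPe : (P : ℕ+) ∣ e d₂ := (coe_dvd P (e d₂)).mpr hped₂
            have hPd₂ : ((π.symm P : Nat.Primes) : ℕ+) ∣ d₂ :=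
              (prime_dvd_mapPM π P d₂).mp hPe
            have hπsymm : π.symm = π := Equiv.symm_swap Q Q'
            rw [hπsymm] at hPd₂
            have hPneQ : P ≠ Q := by
              intro h
              rw [h, hπ, Equiv.swap_apply_left] at hPd₂
              exact hq'd₂ ((coe_dvd Q' d₂).mp hPd₂)
            have hPneQ' : P ≠ Q' := by
              intro h
              have hpq' : p = q' := congrArg Subtype.val h
              rw [hpq'] at hpd₁
              exact hq'd₁ hpd₁
            have hπP : π P = P := Equiv.swap_apply_of_ne_of_ne hPneQ hPneQ'
            rw [hπP] at hPd₂
            have hpd₂ : p ∣ (d₂ : ℕ) := (coe_dvd P d₂).mp hPd₂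
            refine Finset.mem_erase.mpr ⟨fun h => hPneQ (Subtype.ext h), ?_⟩
            exact (hTmem d₂ p).mpr ⟨pp, hpd₁, hpd₂, hpr⟩
          have hqT : q ∈ T d₂ := hq
          have h1 : (T (e d₂)).card ≤ ((T d₂).erase q).card := Finset.card_le_card hsub
          have h2 : ((T d₂).erase q).card = (T d₂).card - 1 := Finset.card_erase_of_mem hqT
          have h3 : 1 ≤ (T d₂).card := Finset.card_pos.mpr ⟨q, hqT⟩
          omega
  obtain ⟨d₂, hD₂, hrd₂, hmin⟩ := key (T d₁).card d₁ hd₁D hrd₁ le_rfl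
  refine ⟨d₁, hd₁D, d₂, hD₂, ?_⟩
  ext p
  simp only [sigma', Set.mem_setOf_eq, Set.mem_inter_iff]
  constructor
  · rintro ⟨pp, hpr⟩
    exact ⟨⟨pp, hpr.trans hrd₁⟩, ⟨pp, hpr.trans hrd₂⟩⟩
  · rintro ⟨⟨pp, hp1⟩, ⟨_, hp2⟩⟩
    exact ⟨pp, hmin p pp hp1 hp2⟩
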